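/- For all integers n ≥ 0 and j ≥ 0: ψ^n(φ^j(u)) = (η^{q^{N−1}}/η)^{n·q^{j+n}} · (∏_{i=0}^{j+n−1} (θ − η^{q^{j+n−1−i}})^{(q−1)·q^i}) · u^{q^{j+n}}. (With σ_∞ = φ and σ_0 = ψ, this is the formula σ_0^n σ_∞^j(u_{k,μ}) = u_{j+n+k, μ·η_*^n} = (μ·η_*^n)^{q^{j+n+k}}·Θ^{(1−q)γ_{j+n+k}(σ)}·u^{q^{j+n+k}} in the case k = 0, μ = 1, where η_* = η^{(1−q)/q} = η^{q^{N−1}}/η.) -/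

import Mathlib

/-- For all `n, j ≥ 0`:
`ψ^n(φ^j(u)) = (η^{q^{N-1}}/η)^{n·q^{j+n}} · (∏_{i<j+n} (θ - η^{q^{j+n-1-i}})^{(q-1)q^i}) · u^{q^{j+n}}`,
the formula `σ₀^n σ∞^j(u) = u_{j+n, η_*^n}` in the case `k = 0`, `μ = 1`. -/
theorem sigma_zero_sigma_infinity_iterates
    (p q N : ℕ) (hp : Nat.Prime p) (hq : ∃ e : ℕ, 0 < e ∧ q = p ^ e)
    (hN : 2 ≤ N)
    (L : Type*) [Field L] [CharP L p]
    (θ η u : L) (hη : η ≠ 0) (hper : η ^ q ^ N = η)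
    (φ : L →+* L)
    (hφθ : φ θ = θ) (hφη : φ η = η ^ q)
    (hφu : φ u = (θ - η) ^ (q - 1) * u ^ q)
    (ψ : L →+* L)
    (hψθ : ψ θ = θ) (hψη : ψ η = η ^ q)
    (hψu : ψ u = ((θ - η) / η) ^ (q - 1) * u ^ q) :
    ∀ n j : ℕ,
      (⇑ψ)^[n] ((⇑φ)^[j] u)
        = (η ^ q ^ (N - 1) / η) ^ (n * q ^ (j + n))
          * (∏ i ∈ Finset.range (j + n),
              (θ - η ^ q ^ (j + n - 1 - i)) ^ ((q - 1) * q ^ i))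
          * u ^ q ^ (j + n) := by
  have hq1 : 1 ≤ q := by
    obtain ⟨e, he, rfl⟩ := hq
    exact Nat.one_le_pow _ _ hp.pos
  have hq1' : q - 1 + 1 = q := Nat.succ_pred_eq_of_pos hq1
  have hN1 : N - 1 + 1 = N := by omega
  -- key exponent fact: (η^q)^{q^{N-1}} = η
  have hkey : (η ^ q) ^ q ^ (N - 1) = η := by
    rw [← pow_mul, ← pow_succ', hN1, hper]
  have hstarq : (η ^ q ^ (N - 1) / η) ^ q = η / η ^ q := by
    rw [div_pow, ← pow_mul, ← pow_succ, hN1, hper]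
  have hψstar : ψ (η ^ q ^ (N - 1) / η) = η / η ^ q := by
    rw [map_div₀, map_pow, hψη, hkey]
  -- action of φ and ψ on the factors of the product
  have hφfac : ∀ m i : ℕ, i < m →
      φ (θ - η ^ q ^ (m - 1 - i)) = θ - η ^ q ^ (m - i) := by
    intro m i him
    rw [map_sub, hφθ, map_pow, hφη, ← pow_mul, ← pow_succ',
      show m - 1 - i + 1 = m - i by omega]
  have hψfac : ∀ m i : ℕ, i < m →
      ψ (θ - η ^ q ^ (m - 1 - i)) = θ - η ^ q ^ (m - i) := by
    intro m i him
    rw [map_sub, hψθ, map_pow, hψη, ← pow_mul, ← pow_succ',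
      show m - 1 - i + 1 = m - i by omega]
  -- case n = 0 : iterates of φ alone
  have hφit : ∀ j : ℕ, (⇑φ)^[j] u
      = (∏ i ∈ Finset.range j, (θ - η ^ q ^ (j - 1 - i)) ^ ((q - 1) * q ^ i))
        * u ^ q ^ j := by
    intro j
    induction j with
    | zero => simp
    | succ j ih =>
      rw [Function.iterate_succ_apply', ih, map_mul, map_pow, hφu, map_prod]
      rw [Finset.prod_range_succ]
      have h1 : ∀ i ∈ Finset.range j,
          φ ((θ - η ^ q ^ (j - 1 - i)) ^ ((q - 1) * q ^ i))
            = (θ - η ^ q ^ (j + 1 - 1 - i)) ^ ((q - 1) * q ^ i) := by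
        intro i hi
        rw [Finset.mem_range] at hi
        rw [map_pow, hφfac j i hi,
          show j - i = j + 1 - 1 - i by omega]
      rw [Finset.prod_congr rfl h1, show j + 1 - 1 - j = 0 by omega, pow_zero,
        pow_one, mul_pow, ← pow_mul, ← pow_mul, ← pow_succ']
      ring
  intro n j
  induction n with
  | zero =>
    simpa using hφit j
  | succ n ih =>
    rw [show j + (n + 1) = (j + n) + 1 by omega]
    set m := j + n with hmdef
    rw [Function.iterate_succ_apply', ih, map_mul, map_mul, map_pow, map_pow,
      hψstar, map_prod, hψu]
    have h1 : ∀ i ∈ Finset.range m,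
        ψ ((θ - η ^ q ^ (m - 1 - i)) ^ ((q - 1) * q ^ i))
          = (θ - η ^ q ^ (m + 1 - 1 - i)) ^ ((q - 1) * q ^ i) := by
      intro i hi
      rw [Finset.mem_range] at hi
      rw [map_pow, hψfac m i hi, show m - i = m + 1 - 1 - i by omega]
    rw [Finset.prod_congr rfl h1, Finset.prod_range_succ,
      show m + 1 - 1 - m = 0 by omega, pow_zero, pow_one]
    -- split the η_* power on the RHS
    have hq' : (η ^ q ^ (N - 1) / η) ^ ((n + 1) * q ^ (m + 1))
        = (η / η ^ q) ^ (n * q ^ m) * (1 / η ^ ((q - 1) * q ^ m)) := by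
      have e1 : (n + 1) * q ^ (m + 1) = q * (n * q ^ m) + q ^ (m + 1) := by
        rw [pow_succ']; ring
      rw [e1, pow_add]
      congr 1
      · rw [pow_mul, hstarq]
      · -- η_*^{q^{m+1}} = 1 / η^{(q-1) q^m}
        have hexp : q * q ^ m = q ^ m + (q - 1) * q ^ m := by
          calc q * q ^ m = (q - 1 + 1) * q ^ m := by rw [hq1']
            _ = q ^ m + (q - 1) * q ^ m := by ring
        rw [pow_succ', pow_mul, hstarq, div_pow, ← pow_mul, hexp, pow_add]
        field_simp
        exact (pow_add η _ _).symm
    -- the u-part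
    have hu : (((θ - η) / η) ^ (q - 1) * u ^ q) ^ q ^ m
        = (θ - η) ^ ((q - 1) * q ^ m) / η ^ ((q - 1) * q ^ m) * u ^ q ^ (m + 1) := by
      rw [mul_pow, ← pow_mul, div_pow, ← pow_mul,
        show q * q ^ m = q ^ (m + 1) from (pow_succ' q m).symm]
    rw [hq', hu]
    have hE : (η : L) ^ ((q - 1) * q ^ m) ≠ 0 := pow_ne_zero _ hη
    field_simp
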